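/- Let I, J₀, J₁ be ideals on an infinite set X. Then cof_{J₀∩J₁}(I) = max{cof_{J₀}(I), cof_{J₁}(I)}. -/

import Mathlib

open Cardinal Set

def IsIdealOn {X : Type*} (I : Set (Set X)) : Prop :=
  (∀ A ∈ I, ∀ B, B ⊆ A → B ∈ I) ∧
  (∀ A ∈ I, ∀ B ∈ I, A ∪ B ∈ I) ∧
  (Set.univ : Set X) ∉ I ∧
  (∀ A : Set X, A.Finite → A ∈ I)

/-- `relCof J I`: least cardinality of a family `𝒜 ⊆ I` such that
every `I₀ ∈ I` satisfies `I₀ \ A ∈ J` for some `A ∈ 𝒜`. -/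
noncomputable def relCof {X : Type*} (J I : Set (Set X)) : Cardinal :=
  sInf {c | ∃ 𝒜 : Set (Set X), 𝒜 ⊆ I ∧ Cardinal.mk 𝒜 = c ∧
    ∀ I₀ ∈ I, ∃ A ∈ 𝒜, I₀ \ A ∈ J}

lemma relCof_le {X : Type*} {J I : Set (Set X)} {𝒜 : Set (Set X)}
    (h𝒜 : 𝒜 ⊆ I) (hcov : ∀ I₀ ∈ I, ∃ A ∈ 𝒜, I₀ \ A ∈ J) :
    relCof J I ≤ Cardinal.mk 𝒜 :=
  csInf_le' ⟨𝒜, h𝒜, rfl, hcov⟩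

lemma relCof_witness {X : Type*} (J I : Set (Set X)) (hJ : ∅ ∈ J) :
    ∃ 𝒜 : Set (Set X), 𝒜 ⊆ I ∧ Cardinal.mk 𝒜 = relCof J I ∧
      ∀ I₀ ∈ I, ∃ A ∈ 𝒜, I₀ \ A ∈ J := by
  have hne : {c | ∃ 𝒜 : Set (Set X), 𝒜 ⊆ I ∧ Cardinal.mk 𝒜 = c ∧
      ∀ I₀ ∈ I, ∃ A ∈ 𝒜, I₀ \ A ∈ J}.Nonempty :=
    ⟨Cardinal.mk I, I, le_refl _, rfl, fun I₀ hI₀ => ⟨I₀, hI₀, by simp [hJ]⟩⟩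
  exact csInf_mem hne

lemma one_le_relCof {X : Type*} {J I : Set (Set X)} (hI : ∅ ∈ I) (hJ : ∅ ∈ J) :
    1 ≤ relCof J I := by
  obtain ⟨𝒜, -, hcard, hcov⟩ := relCof_witness J I hJ
  obtain ⟨A, hA, -⟩ := hcov ∅ hI
  rw [← hcard, Cardinal.one_le_iff_ne_zero, Cardinal.mk_ne_zero_iff]
  exact ⟨A, hA⟩

lemma relCof_mono {X : Type*} {J J' I : Set (Set X)} (h : J ⊆ J') (hJ : ∅ ∈ J) :
    relCof J' I ≤ relCof J I := by
  obtain ⟨𝒜, h𝒜, hcard, hcov⟩ := relCof_witness J I hJ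
  rw [← hcard]
  exact relCof_le h𝒜 fun I₀ hI₀ => by
    obtain ⟨A, hA, hd⟩ := hcov I₀ hI₀; exact ⟨A, hA, h hd⟩

lemma relCof_eq_one_of_lt_aleph0 {X : Type*} {J I : Set (Set X)}
    (hI : IsIdealOn I) (hJ : IsIdealOn J) (h : relCof J I < Cardinal.aleph0) :
    relCof J I = 1 := by
  obtain ⟨hJd, -, -, hJf⟩ := hJ
  obtain ⟨hId, hIu, -, hIf⟩ := hI
  obtain ⟨𝒜, h𝒜, hcard, hcov⟩ := relCof_witness J I (hJf ∅ finite_empty)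
  have hfin : 𝒜.Finite := by
    rw [← Set.finite_coe_iff, ← Cardinal.lt_aleph0_iff_finite, hcard]; exact h
  have hUn : ∀ s : Set (Set X), s.Finite → s ⊆ I → ⋃₀ s ∈ I := by
    intro s hs
    refine Set.Finite.induction_on (motive := fun s _ => s ⊆ I → ⋃₀ s ∈ I) s hs
      (fun _ => by simpa using hIf ∅ finite_empty) ?_
    intro a t _ _ ih hsub
    rw [Set.sUnion_insert]
    exact hIu _ (hsub (mem_insert _ _)) _ (ih fun x hx => hsub (mem_insert_of_mem _ hx))
  have hU : ⋃₀ 𝒜 ∈ I := hUn 𝒜 hfin h𝒜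
  refine le_antisymm ?_ (one_le_relCof (hIf ∅ finite_empty) (hJf ∅ finite_empty))
  have : relCof J I ≤ Cardinal.mk ({⋃₀ 𝒜} : Set (Set X)) := by
    refine relCof_le (by simpa using hU) fun I₀ hI₀ => ?_
    obtain ⟨A, hA, hd⟩ := hcov I₀ hI₀
    exact ⟨⋃₀ 𝒜, rfl, hJd _ hd _ (diff_subset_diff_right (subset_sUnion_of_mem hA))⟩
  simpa using this

theorem stmt10 {X : Type*} [Infinite X] (I J₀ J₁ : Set (Set X))
    (hI : IsIdealOn I) (hJ₀ : IsIdealOn J₀) (hJ₁ : IsIdealOn J₁) :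
    relCof (J₀ ∩ J₁) I = max (relCof J₀ I) (relCof J₁ I) := by
  have h0 : ∅ ∈ J₀ := hJ₀.2.2.2 ∅ finite_empty
  have h1 : ∅ ∈ J₁ := hJ₁.2.2.2 ∅ finite_empty
  have h01 : ∅ ∈ J₀ ∩ J₁ := ⟨h0, h1⟩
  refine le_antisymm ?_
    (max_le (relCof_mono inter_subset_left h01) (relCof_mono inter_subset_right h01))
  obtain ⟨𝒜₀, hs0, hc0, hcov0⟩ := relCof_witness J₀ I h0
  obtain ⟨𝒜₁, hs1, hc1, hcov1⟩ := relCof_witness J₁ I h1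
  have hF : relCof (J₀ ∩ J₁) I ≤
      Cardinal.mk ((fun p : Set X × Set X => p.1 ∪ p.2) '' (𝒜₀ ×ˢ 𝒜₁)) := by
    refine relCof_le ?_ ?_
    · rintro _ ⟨⟨A, B⟩, ⟨hA, hB⟩, rfl⟩
      exact hI.2.1 _ (hs0 hA) _ (hs1 hB)
    · intro I₀ hI₀
      obtain ⟨A, hA, hdA⟩ := hcov0 I₀ hI₀
      obtain ⟨B, hB, hdB⟩ := hcov1 I₀ hI₀
      refine ⟨A ∪ B, ⟨(A, B), ⟨hA, hB⟩, rfl⟩, ?_, ?_⟩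
      · exact hJ₀.1 _ hdA _ (diff_subset_diff_right subset_union_left)
      · exact hJ₁.1 _ hdB _ (diff_subset_diff_right subset_union_right)
  have hcard : Cardinal.mk ((fun p : Set X × Set X => p.1 ∪ p.2) '' (𝒜₀ ×ˢ 𝒜₁)) ≤
      relCof J₀ I * relCof J₁ I := by
    calc Cardinal.mk ((fun p : Set X × Set X => p.1 ∪ p.2) '' (𝒜₀ ×ˢ 𝒜₁))
        ≤ Cardinal.mk (𝒜₀ ×ˢ 𝒜₁ : Set (Set X × Set X)) := Cardinal.mk_image_le
      _ = Cardinal.mk 𝒜₀ * Cardinal.mk 𝒜₁ :=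
          (Cardinal.mk_congr (Equiv.Set.prod _ _)).trans (by simp)
      _ = relCof J₀ I * relCof J₁ I := by rw [hc0, hc1]
  refine hF.trans (hcard.trans ?_)
  rcases lt_or_ge (max (relCof J₀ I) (relCof J₁ I)) Cardinal.aleph0 with h | h
  · have e0 := relCof_eq_one_of_lt_aleph0 hI hJ₀ ((le_max_left _ _).trans_lt h)
    have e1 := relCof_eq_one_of_lt_aleph0 hI hJ₁ ((le_max_right _ _).trans_lt h)
    rw [e0, e1]; simp
  · calc relCof J₀ I * relCof J₁ I
        ≤ max (relCof J₀ I) (relCof J₁ I) * max (relCof J₀ I) (relCof J₁ I) :=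
          mul_le_mul' (le_max_left _ _) (le_max_right _ _)
      _ = _ := Cardinal.mul_eq_self h
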